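/- arXiv:2105.08924 — 2 statements merged into one kernel-verified Lean document; each statement's English description precedes it below -/
import Mathlib

section
/- Let 0 < λ < 1 and ν > 0, and let g'_{λ,ν} be the inner product on 𝔤_1 whose matrix in the basis e₀, e₁, e₂ is [[1, λ, 0], [λ, 1, 0], [0, 0, ν]]. Then the matrix of the Ricci form of (𝔤_1, g'_{λ,ν}) in this basis is [[−4λ/((λ+1)ν), −2(λ²+1)/((λ+1)ν), 0], [−2(λ²+1)/((λ+1)ν), 4(λ² − λ − 1)/((λ+1)ν), 0], [0, 0, −4/(λ+1)]], and the only endomorphism of 𝔤_1 skew-symmetric with respect to both g'_{λ,ν} and Ric is 0. -/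
noncomputable section
set_option maxHeartbeats 2000000

open scoped BigOperators

/-- The underlying space of the 3-dimensional Lie algebras under consideration. -/
abbrev V3 : Type := Fin 3 → ℝ

/-- The standard basis `e₀, e₁, e₂`. -/
def e3 (i : Fin 3) : V3 := Pi.single i 1

/-- The bracket of the Lie algebra `𝔤_c`:
`[e₀,e₁] = 0`, `[e₂,e₀] = e₁`, `[e₂,e₁] = −c e₀ + 2 e₁`, extended bilinearly. -/
def braC (c : ℝ) (x y : V3) : V3 :=
  ![-c * (x 2 * y 1 - y 2 * x 1),
    (x 2 * y 0 - y 2 * x 0) + 2 * (x 2 * y 1 - y 2 * x 1),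
    0]

/-- The inner product `g'_{λ,ν}` on `𝔤_1`, with matrix `[[1,λ,0],[λ,1,0],[0,0,ν]]`
in the basis `e₀,e₁,e₂`. -/
def gL (lam ν : ℝ) (x y : V3) : ℝ :=
  x 0 * y 0 + lam * (x 0 * y 1 + x 1 * y 0) + x 1 * y 1 + ν * (x 2 * y 2)

/-- The curvature tensor `R(X,Y)Z = ∇_X ∇_Y Z − ∇_Y ∇_X Z − ∇_{[X,Y]} Z`. -/
def Rc (br nab : V3 → V3 → V3) (X Y Z : V3) : V3 :=
  nab X (nab Y Z) - nab Y (nab X Z) - nab (br X Y) Z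

/-- The Ricci form `Ric(X,Y) = tr (Z ↦ R(Z,X)Y)`. -/
def RicF (br nab : V3 → V3 → V3) (X Y : V3) : ℝ :=
  ∑ k : Fin 3, Rc br nab (e3 k) X Y k

/-- The explicit Levi-Civita connection of `(𝔤_1, g'_{λ,ν})`. -/
def nabF (lam ν : ℝ) (x y : V3) : V3 :=
  ![(-lam * (x 0 * y 2 + x 2 * y 0) + lam * (x 1 * y 2) - x 2 * y 1) / (lam + 1),
    (-lam * (x 0 * y 2) + x 2 * y 0 - (lam + 2) * (x 1 * y 2) + lam * (x 2 * y 1)) / (lam + 1),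
    (lam * (x 0 * y 0 + x 0 * y 1 + x 1 * y 0) + (2 - lam) * (x 1 * y 1)) / ν]

private lemma cancel_aux {c x : ℝ} (hc : c ≠ 0) (h : c * x = 0) : x = 0 :=
  (mul_eq_zero.mp h).resolve_left hc

/-- the Ricci form of `(𝔤_1, g'_{λ,ν})` has the stated matrix in the
basis `e₀, e₁, e₂`, and the only endomorphism of `𝔤_1` skew-symmetric with respect to
both `g'_{λ,ν}` and `Ric` is `0`. -/
theorem stmt9 (lam ν : ℝ) (hlam0 : 0 < lam) (hlam1 : lam < 1) (hν : 0 < ν)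
    (nab : V3 → V3 → V3)
    (hK : ∀ X Y Z : V3, 2 * gL lam ν (nab X Y) Z =
      gL lam ν (braC 1 X Y) Z - gL lam ν (braC 1 Y Z) X + gL lam ν (braC 1 Z X) Y) :
    (∀ i j : Fin 3, RicF (braC 1) nab (e3 i) (e3 j) =
      !![-4*lam/((lam+1)*ν), -2*(lam^2+1)/((lam+1)*ν), 0;
         -2*(lam^2+1)/((lam+1)*ν), 4*(lam^2 - lam - 1)/((lam+1)*ν), 0;
         0, 0, -4/(lam+1)] i j) ∧
    (∀ A : Module.End ℝ V3,
      (∀ x y : V3, gL lam ν (A x) y + gL lam ν x (A y) = 0) →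
      (∀ x y : V3, RicF (braC 1) nab (A x) y + RicF (braC 1) nab x (A y) = 0) →
      A = 0) := by
  have hd : lam + 1 ≠ 0 := by positivity
  have hp1 : (0:ℝ) < 1 - lam := by linarith
  have hp2 : (0:ℝ) < lam + 1 := by linarith
  have hm : (2 : ℝ) * (lam - 1) ≠ 0 := by nlinarith
  have hν' : ν ≠ 0 := hν.ne'
  -- the connection is the explicit one
  have hnab : ∀ x y : V3, nab x y = nabF lam ν x y := by
    intro x y
    have h0 := hK x y (e3 0)
    have h1 := hK x y (e3 1)
    have h2 := hK x y (e3 2)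
    simp [gL, braC, e3, Pi.single_apply, Fin.ext_iff] at h0 h1 h2
    funext i
    fin_cases i
    · show nab x y 0 = (-lam * (x 0 * y 2 + x 2 * y 0) + lam * (x 1 * y 2) - x 2 * y 1) / (lam + 1)
      rw [eq_div_iff hd]
      refine mul_left_cancel₀ hm ?_
      linear_combination -h0 + lam * h1
    · show nab x y 1 =
        (-lam * (x 0 * y 2) + x 2 * y 0 - (lam + 2) * (x 1 * y 2) + lam * (x 2 * y 1)) / (lam + 1)
      rw [eq_div_iff hd]
      refine mul_left_cancel₀ hm ?_
      linear_combination -h1 + lam * h0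
    · show nab x y 2 = (lam * (x 0 * y 0 + x 0 * y 1 + x 1 * y 0) + (2 - lam) * (x 1 * y 1)) / ν
      rw [eq_div_iff hν']
      linear_combination (1/2 : ℝ) * h2
  -- the Ricci form in closed bilinear form
  have hRic : ∀ v w : V3, RicF (braC 1) nab v w =
      (-4*lam*(v 0 * w 0) - 2*(lam^2+1)*(v 0 * w 1 + v 1 * w 0)
        + 4*(lam^2 - lam - 1)*(v 1 * w 1)) / ((lam+1)*ν) - 4*(v 2 * w 2)/(lam+1) := by
    intro v w
    simp only [RicF, Rc, hnab]
    simp [nabF, braC, e3, Pi.single_apply, Fin.sum_univ_three]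
    field_simp
    ring
  have he : ∀ i k : Fin 3, e3 i k = if k = i then 1 else 0 := by
    intro i k; simp [e3, Pi.single_apply]
  constructor
  · intro i j
    rw [hRic]
    fin_cases i <;> fin_cases j <;>
      simp [he] <;> field_simp <;> ring
  · intro A hg hr
    have hg00 := hg (e3 0) (e3 0)
    have hg01 := hg (e3 0) (e3 1)
    have hg02 := hg (e3 0) (e3 2)
    have hg11 := hg (e3 1) (e3 1)
    have hg12 := hg (e3 1) (e3 2)
    have hg22 := hg (e3 2) (e3 2)
    simp [gL, he] at hg00 hg01 hg02 hg11 hg12 hg22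
    have hr00 := hr (e3 0) (e3 0)
    have hr02 := hr (e3 0) (e3 2)
    have hr12 := hr (e3 1) (e3 2)
    simp only [hRic] at hr00 hr02 hr12
    simp [he] at hr00 hr02 hr12
    field_simp at hr00 hr02 hr12
    have hr00' : -(4 * lam * A (e3 0) 0) - 2 * (lam ^ 2 + 1) * A (e3 0) 1 = 0 := by
      rcases hr00 with h | h | h
      · exact h
      · exact absurd h hd
      · exact absurd h hν'
    have ha22 : A (e3 2) 2 = 0 := hg22.resolve_left hν'
    -- upper-left block
    have ha10 : A (e3 0) 1 = 0 := by
      refine cancel_aux (c := 2 * (1 - lam ^ 2)) (show (0:ℝ) < 2 * (1 - lam ^ 2) by nlinarith).ne' ?_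
      linear_combination -hr00' - 4 * lam * hg00
    have ha00 : A (e3 0) 0 = 0 := by
      linear_combination hg00 - lam * ha10
    have ha11 : A (e3 1) 1 = 0 := by
      refine cancel_aux (c := 1 - lam ^ 2) (show (0:ℝ) < 1 - lam ^ 2 by nlinarith).ne' ?_
      linear_combination hg11 - lam * hg01 + lam ^ 2 * ha00 + lam * ha10
    have ha01 : A (e3 1) 0 = 0 := by
      linear_combination hg01 - lam * ha00 - ha10 - lam * ha11
    -- mixed block
    have ha12 : A (e3 2) 1 = 0 := by
      refine cancel_aux (c := 2 * (1 - lam) * (lam + 1) ^ 3)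
        (show (0:ℝ) < 2 * (1 - lam) * (lam + 1) ^ 3 by nlinarith [mul_pos hp1 (pow_pos hp2 3)]).ne' ?_
      linear_combination (lam + 1) * (lam - 1) * hr02 + 4 * (lam + 1) * (lam - 1) * hg02
        - 2 * (lam + 1) * hr12 - 8 * (lam + 1) * hg12
    have ha02 : A (e3 2) 0 = 0 := by
      refine cancel_aux (c := 2 * (lam + 1) * (1 - lam) ^ 2)
        (show (0:ℝ) < 2 * (lam + 1) * (1 - lam) ^ 2 by nlinarith [mul_pos hp2 (pow_pos hp1 2)]).ne' ?_
      linear_combination -(lam + 1) * hr12 - 4 * (lam + 1) * hg12 + 4 * lam * (lam + 1) * (lam - 1) * ha12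
    have ha20 : A (e3 0) 2 = 0 := by
      refine cancel_aux (c := ν) hν' ?_
      linear_combination hg02 - ha02 - lam * ha12
    have ha21 : A (e3 1) 2 = 0 := by
      refine cancel_aux (c := ν) hν' ?_
      linear_combination hg12 - lam * ha02 - ha12
    have hcol : ∀ j : Fin 3, A (e3 j) = 0 := by
      intro j
      fin_cases j <;> funext k <;> fin_cases k
      · exact ha00
      · exact ha10
      · exact ha20
      · exact ha01
      · exact ha11
      · exact ha21
      · exact ha02
      · exact ha12
      · exact ha22
    apply LinearMap.ext
    intro x
    have hx : x = x 0 • e3 0 + x 1 • e3 1 + x 2 • e3 2 := by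
      funext i
      fin_cases i <;> simp [e3, Pi.single_apply]
    rw [hx]
    simp [map_add, map_smul, hcol]
end
end

section
/- Let 0 < c < 1, 0 ≤ μ < 1, ν > 0, and let g_{μ,ν} be the inner product on 𝔤_c whose matrix in the basis e₀, e₁, e₂ is [[(cμ + c − 2)/(2(c−1)c²), (μ−1)/(2(c−1)c), 0], [(μ−1)/(2(c−1)c), (μ−1)/(2(c−1)), 0], [0, 0, ν]], with Levi-Civita product ∇. Then the symmetry subspace 𝔰 = {v ∈ 𝔤_c : ∇_u v = [u,v] for all u ∈ 𝔤_c} equals ℝ·e₂ if μ = 0, equals ℝ·(e₀ + (1/√c)·e₁) if μ = √c, and equals {0} if 0 < μ < 1 and μ ≠ √c. (Consequently the index of symmetry of (G_c, g_{μ,ν}) is 1 in the first two cases and 0 otherwise.) -/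
noncomputable section

open scoped BigOperators

/-- The matrix of the inner product `g_{μ,ν}` on `𝔤_c`, `0 < c < 1`, in the basis
`e₀,e₁,e₂`. -/
def Gm (c μ ν : ℝ) : Matrix (Fin 3) (Fin 3) ℝ :=
  !![(c*μ + c - 2)/(2*(c - 1)*c^2), (μ - 1)/(2*(c - 1)*c), 0;
     (μ - 1)/(2*(c - 1)*c), (μ - 1)/(2*(c - 1)), 0;
     0, 0, ν]

/-- The bilinear form associated with a matrix. -/
def gM (M : Matrix (Fin 3) (Fin 3) ℝ) (x y : V3) : ℝ :=
  ∑ i : Fin 3, ∑ j : Fin 3, M i j * x i * y j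

lemma gM_sub (M : Matrix (Fin 3) (Fin 3) ℝ) (a b Z : V3) :
    gM M (a - b) Z = gM M a Z - gM M b Z := by
  simp only [gM, Fin.sum_univ_three, Pi.sub_apply]
  ring

set_option maxHeartbeats 1000000 in
/-- Nondegeneracy of the metric. -/
lemma gm_nondeg (c μ ν : ℝ) (hc : c ≠ 0) (hc1 : c - 1 ≠ 0) (hμp : μ + 1 ≠ 0)
    (hμ1 : μ - 1 ≠ 0) (hν : ν ≠ 0) (x : V3)
    (h : ∀ Z, gM (Gm c μ ν) x Z = 0) : x = 0 := by
  have h0 := h ![1,0,0]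
  have h1 := h ![0,1,0]
  have h2 := h ![0,0,1]
  simp only [gM, Gm, Fin.sum_univ_three, Matrix.cons_val', Matrix.cons_val_zero,
    Matrix.cons_val_one, Matrix.head_cons, Matrix.empty_val', Matrix.cons_val_fin_one,
    Matrix.head_fin_const, Matrix.cons_val_two, Matrix.tail_cons, Matrix.of_apply] at h0 h1 h2
  field_simp at h0 h1 h2
  have hx0 : x 0 = 0 := by
    have key : (2*(c-1)^2*c*(μ+1)) * x 0 = (2*(c-1)^2*c*(μ+1)) * 0 := by
      linear_combination 2*(c-1)*c * h0 - 2*(c-1) * h1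
    exact mul_left_cancel₀
      (mul_ne_zero (mul_ne_zero (mul_ne_zero two_ne_zero (pow_ne_zero 2 hc1)) hc) hμp) key
  have hx1 : x 1 = 0 := by
    have key : (2*(c-1)*(μ-1)*c) * x 1 = (2*(c-1)*(μ-1)*c) * 0 := by
      exact mul_left_cancel₀ hc (by linear_combination 2*(c-1) * h1 - 2*(c-1)*c*(μ-1) * hx0)
    exact mul_left_cancel₀
      (mul_ne_zero (mul_ne_zero (mul_ne_zero two_ne_zero hc1) hμ1) hc) key
  have hx2 : x 2 = 0 := by
    have key : ν * x 2 = ν * 0 := mul_left_cancel₀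
      (mul_ne_zero (mul_ne_zero (pow_ne_zero 2 hc) two_ne_zero) hc1) (by linear_combination h2)
    exact mul_left_cancel₀ hν key
  funext i
  fin_cases i
  · exact hx0
  · exact hx1
  · exact hx2

set_option maxHeartbeats 4000000 in
/-- The symmetry condition reduced to three scalar linear equations. -/
lemma cond_iff (c μ ν : ℝ) (hc : c ≠ 0) (hc1 : c - 1 ≠ 0) (v : V3) :
    (∀ u Z : V3, gM (Gm c μ ν) (braC c u v) Z + gM (Gm c μ ν) (braC c v Z) u
        - gM (Gm c μ ν) (braC c Z u) v = 0) ↔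
      (μ * v 2 = 0 ∧ (1-μ) * v 0 + (c-μ) * v 1 = 0 ∧ (c-μ) * v 0 + c*(1-μ) * v 1 = 0) := by
  constructor
  · intro h
    have h1 := h ![1,0,0] ![0,1,0]
    have h2 := h ![1,0,0] ![0,0,1]
    have h3 := h ![0,1,0] ![0,0,1]
    simp only [gM, Gm, braC, Fin.sum_univ_three, Matrix.cons_val', Matrix.cons_val_zero,
      Matrix.cons_val_one, Matrix.head_cons, Matrix.empty_val', Matrix.cons_val_fin_one,
      Matrix.head_fin_const, Matrix.cons_val_two, Matrix.tail_cons, Matrix.of_apply]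
        at h1 h2 h3
    field_simp at h1 h2 h3
    have hK1 : ((-8)*(c-1)^3*c^2) ≠ 0 :=
      mul_ne_zero (mul_ne_zero (by norm_num) (pow_ne_zero 3 hc1)) (pow_ne_zero 2 hc)
    have hK2 : (16*(c-1)^3*c^3) ≠ 0 :=
      mul_ne_zero (mul_ne_zero (by norm_num) (pow_ne_zero 3 hc1)) (pow_ne_zero 3 hc)
    have hK3 : (64*(c-1)^5*c^4) ≠ 0 :=
      mul_ne_zero (mul_ne_zero (by norm_num) (pow_ne_zero 5 hc1)) (pow_ne_zero 4 hc)
    refine ⟨?_, ?_, ?_⟩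
    · have key : ((-8)*(c-1)^3*c^2) * (μ * v 2) = ((-8)*(c-1)^3*c^2) * 0 := by
        linear_combination 4*(c-1)^2*c^2 * h1
      exact mul_left_cancel₀ hK1 key
    · have key : (16*(c-1)^3*c^3) * ((1-μ) * v 0 + (c-μ) * v 1)
          = (16*(c-1)^3*c^3) * 0 := by linear_combination 8*(c-1)^3*c^3 * h2
      exact mul_left_cancel₀ hK2 key
    · have key : (64*(c-1)^5*c^4) * ((c-μ) * v 0 + c*(1-μ) * v 1)
          = (64*(c-1)^5*c^4) * 0 := by linear_combination 32*(c-1)^5*c^4 * h3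
      exact mul_left_cancel₀ hK3 key
  · rintro ⟨h1, h2, h3⟩ u Z
    simp only [gM, Gm, braC, Fin.sum_univ_three, Matrix.cons_val', Matrix.cons_val_zero,
      Matrix.cons_val_one, Matrix.head_cons, Matrix.empty_val', Matrix.cons_val_fin_one,
      Matrix.head_fin_const, Matrix.cons_val_two, Matrix.tail_cons, Matrix.of_apply]
    linear_combination (norm := (field_simp; ring))
      (-(u 0 * Z 1 - u 1 * Z 0)/c) * h1 + ((u 0 * Z 2 - u 2 * Z 0)/((c-1)*c)) * h2
        + ((u 1 * Z 2 - u 2 * Z 1)/((c-1)*c)) * h3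

/-- The symmetry condition in terms of the Levi-Civita product. -/
lemma sym_iff (c μ ν : ℝ) (hc : c ≠ 0) (hc1 : c - 1 ≠ 0) (hμp : μ + 1 ≠ 0)
    (hμ1 : μ - 1 ≠ 0) (hν : ν ≠ 0) (nab : V3 → V3 → V3)
    (hK : ∀ X Y Z : V3, 2 * gM (Gm c μ ν) (nab X Y) Z =
      gM (Gm c μ ν) (braC c X Y) Z - gM (Gm c μ ν) (braC c Y Z) X
        + gM (Gm c μ ν) (braC c Z X) Y) (v : V3) :
    (∀ u : V3, nab u v = braC c u v) ↔
      (μ * v 2 = 0 ∧ (1-μ) * v 0 + (c-μ) * v 1 = 0 ∧ (c-μ) * v 0 + c*(1-μ) * v 1 = 0) := by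
  rw [← cond_iff c μ ν hc hc1 v]
  constructor
  · intro h u Z
    have hk := hK u v Z
    rw [h u] at hk
    linarith
  · intro h u
    have key : ∀ Z, gM (Gm c μ ν) (nab u v - braC c u v) Z = 0 := by
      intro Z
      rw [gM_sub]
      have hk := hK u v Z
      have h2 := h u Z
      linarith
    have := gm_nondeg c μ ν hc hc1 hμp hμ1 hν _ key
    exact sub_eq_zero.mp this

/-- for `0 < c < 1`, the symmetry subspace
`𝔰 = {v : ∇_u v = [u,v] for all u}` of `(𝔤_c, g_{μ,ν})` is `ℝ e₂` when `μ = 0`,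
`ℝ (e₀ + (1/√c) e₁)` when `μ = √c`, and `{0}` when `0 < μ < 1`, `μ ≠ √c`. -/
theorem stmt16 (c μ ν : ℝ) (hc0 : 0 < c) (hc1 : c < 1) (hμ0 : 0 ≤ μ) (hμ1 : μ < 1)
    (hν : 0 < ν) (nab : V3 → V3 → V3)
    (hK : ∀ X Y Z : V3, 2 * gM (Gm c μ ν) (nab X Y) Z =
      gM (Gm c μ ν) (braC c X Y) Z - gM (Gm c μ ν) (braC c Y Z) X
        + gM (Gm c μ ν) (braC c Z X) Y) :
    (μ = 0 → ∀ v : V3,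
      (∀ u : V3, nab u v = braC c u v) ↔ ∃ t : ℝ, v = t • e3 2) ∧
    (μ = Real.sqrt c → ∀ v : V3,
      (∀ u : V3, nab u v = braC c u v) ↔
        ∃ t : ℝ, v = t • (e3 0 + (1/Real.sqrt c) • e3 1)) ∧
    (0 < μ → μ ≠ Real.sqrt c → ∀ v : V3,
      (∀ u : V3, nab u v = braC c u v) ↔ v = 0) := by
  have hc : c ≠ 0 := hc0.ne'
  have hc1' : c - 1 ≠ 0 := sub_ne_zero.mpr hc1.ne
  have hμp : μ + 1 ≠ 0 := by positivity
  have hμ1' : μ - 1 ≠ 0 := sub_ne_zero.mpr hμ1.ne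
  have hν' : ν ≠ 0 := hν.ne'
  have main := sym_iff c μ ν hc hc1' hμp hμ1' hν' nab hK
  refine ⟨?_, ?_, ?_⟩
  · -- μ = 0
    rintro rfl v
    rw [main v]
    constructor
    · rintro ⟨-, h2, h3⟩
      refine ⟨v 2, ?_⟩
      have hv0 : v 0 = 0 := by
        have key : (1 - c) * v 0 = (1 - c) * 0 := by linear_combination h2 - h3
        exact mul_left_cancel₀ (fun h => hc1' (by linarith [sub_eq_zero.mp h])) key
      have hv1 : v 1 = 0 := by
        have key : c * v 1 = c * 0 := by linear_combination h2 - hv0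
        exact mul_left_cancel₀ hc key
      funext i
      fin_cases i <;> simp [e3, Pi.single_apply, hv0, hv1]
    · rintro ⟨t, rfl⟩
      have e0 : (t • e3 2) 0 = 0 := by simp [e3, Pi.single_apply]
      have e1 : (t • e3 2) 1 = 0 := by simp [e3, Pi.single_apply]
      refine ⟨by ring, by rw [e0, e1]; ring, by rw [e0, e1]; ring⟩
  · -- μ = √c
    rintro rfl v
    rw [main v]
    have hs0 : Real.sqrt c ≠ 0 := by positivity
    have hs1 : Real.sqrt c < 1 := by
      rw [show (1:ℝ) = Real.sqrt 1 by simp]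
      exact Real.sqrt_lt_sqrt hc0.le hc1
    have hsq : Real.sqrt c * Real.sqrt c = c := Real.mul_self_sqrt hc0.le
    constructor
    · rintro ⟨h1, h2, -⟩
      refine ⟨v 0, ?_⟩
      have hv2 : v 2 = 0 := by
        have key : Real.sqrt c * v 2 = Real.sqrt c * 0 := by linear_combination h1
        exact mul_left_cancel₀ hs0 key
      have hv1 : v 1 = v 0 / Real.sqrt c := by
        have key : ((1 - Real.sqrt c) * Real.sqrt c) * v 1
            = ((1 - Real.sqrt c) * Real.sqrt c) * (v 0 / Real.sqrt c) := by
          field_simp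
          linear_combination -h2 - v 1 * hsq
        exact mul_left_cancel₀
          (mul_ne_zero (sub_ne_zero.mpr (by linarith)) hs0) key
      funext i
      fin_cases i <;>
        simp [e3, Pi.single_apply, hv1, hv2, div_eq_mul_inv, mul_comm]
    · rintro ⟨t, rfl⟩
      have e0 : (t • (e3 0 + (1/Real.sqrt c) • e3 1)) 0 = t := by
        simp [e3, Pi.single_apply]
      have e1 : (t • (e3 0 + (1/Real.sqrt c) • e3 1)) 1 = t / Real.sqrt c := by
        simp [e3, Pi.single_apply]; ring
      have e2 : (t • (e3 0 + (1/Real.sqrt c) • e3 1)) 2 = 0 := by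
        simp [e3, Pi.single_apply]
      refine ⟨by rw [e2]; ring, ?_, ?_⟩
      · rw [e0, e1]
        field_simp
        linear_combination (-t) * hsq
      · rw [e0, e1]
        field_simp
        linear_combination (-t) * hsq
  · -- 0 < μ, μ ≠ √c
    rintro hμpos hμne v
    rw [main v]
    constructor
    · rintro ⟨h1, h2, h3⟩
      have hv2 : v 2 = 0 := by
        have key : μ * v 2 = μ * 0 := by linear_combination h1
        exact mul_left_cancel₀ hμpos.ne' key
      have hdet : (1 - c) * (c - μ^2) ≠ 0 := by
        refine mul_ne_zero (by intro h; apply hc1'; linarith [sub_eq_zero.mp h]) ?_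
        intro h
        apply hμne
        have : μ^2 = c := by linarith [sub_eq_zero.mp h]
        rw [← this, Real.sqrt_sq hμ0]
      have hv0 : v 0 = 0 := by
        have key : ((1 - c) * (c - μ^2)) * v 0 = ((1 - c) * (c - μ^2)) * 0 := by
          linear_combination (c*(1-μ)) * h2 - (c-μ) * h3
        exact mul_left_cancel₀ hdet key
      have hv1 : v 1 = 0 := by
        have key : (c * (1-μ)) * v 1 = (c * (1-μ)) * 0 := by
          linear_combination h3 - (c-μ) * hv0
        exact mul_left_cancel₀ (mul_ne_zero hc (by intro h; apply hμ1'; linarith [sub_eq_zero.mp h])) key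
      funext i
      fin_cases i <;> simpa using by first | exact hv0 | exact hv1 | exact hv2
    · rintro rfl
      refine ⟨by simp, by simp, by simp⟩
end
end
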